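/- Let $N$ be a positive integer, $h$ a divisor of $N$, and $v$ an integer. Then the map $\chi_{N,v,h} : \Gamma_0(N) \to \mathbb{C}^\times$ defined by $\chi_{N,v,h}\begin{pmatrix} a & b \\ c & d \end{pmatrix} = e^{-2\pi i \, v c d / (Nh)}$ is a group homomorphism whose kernel contains $\Gamma_0(Nh)$, provided $h \mid 24$ and $h \mid N$. -/

import Mathlib

lemma sq_one_of_dvd_24 (h : ℕ) (hh : h ∣ 24) (d : ℤ)
    (hu : IsUnit (d : ZMod h)) : (h : ℤ) ∣ d ^ 2 - 1 := by
  have key : (d : ZMod h) ^ 2 = 1 := by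
    have h24 : h ≤ 24 := Nat.le_of_dvd (by norm_num) hh
    have h0 : 0 < h := Nat.pos_of_dvd_of_pos hh (by norm_num)
    have all : ∀ x : ZMod h, IsUnit x → x ^ 2 = 1 := by
      interval_cases h <;> first
        | decide
        | norm_num at hh
    exact all _ hu
  have : ((d ^ 2 - 1 : ℤ) : ZMod h) = 0 := by push_cast; rw [key]; ring
  exact (ZMod.intCast_zmod_eq_zero_iff_dvd _ _).mp this

lemma key_dvd (N h : ℕ) (hh24 : h ∣ 24) (hhN : h ∣ N)
    (a₁ b₁ c₁ d₁ a₂ b₂ c₂ d₂ : ℤ)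
    (det1 : a₁ * d₁ - b₁ * c₁ = 1) (det2 : a₂ * d₂ - b₂ * c₂ = 1)
    (hc1 : (N : ℤ) ∣ c₁) (hc2 : (N : ℤ) ∣ c₂) :
    ((N : ℤ) * h) ∣ ((c₁ * a₂ + d₁ * c₂) * (c₁ * b₂ + d₁ * d₂) - c₁ * d₁ - c₂ * d₂) := by
  have hhZ : (h : ℤ) ∣ (N : ℤ) := Int.natCast_dvd_natCast.mpr hhN
  have hd : (h : ℤ) ∣ d₁ ^ 2 - 1 := by
    apply sq_one_of_dvd_24 h hh24
    have hc1h : ((c₁ : ℤ) : ZMod h) = 0 :=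
      (ZMod.intCast_zmod_eq_zero_iff_dvd _ _).mpr (dvd_trans hhZ hc1)
    refine IsUnit.of_mul_eq_one ((a₁ : ZMod h)) ?_
    have : ((a₁*d₁ - b₁*c₁ : ℤ) : ZMod h) = 1 := by rw [det1]; norm_num
    push_cast at this
    rw [hc1h] at this
    linear_combination this
  obtain ⟨k₁, hk₁⟩ := hc1
  obtain ⟨k₂, hk₂⟩ := hc2
  obtain ⟨m, hm⟩ := hhZ
  obtain ⟨t, ht⟩ := hd
  refine ⟨m * (k₁ * k₁ * a₂ * b₂ + 2 * k₁ * d₁ * b₂ * k₂) + t * k₂ * d₂, ?_⟩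
  subst hk₁ hk₂
  linear_combination ((N:ℤ) * k₁ * d₁) * det2 + ((N:ℤ) * k₂ * d₂) * ht
    + ((N:ℤ)*(k₁*k₁*a₂*b₂ + 2*k₁*d₁*b₂*k₂)) * hm

lemma exp_one_of_dvd (N h : ℕ) (hN : 0 < N) (hh : 0 < h) (v x : ℤ)
    (hx : ((N : ℤ) * h) ∣ x) :
    Complex.exp (-(2 * (Real.pi : ℂ) * Complex.I * (v : ℂ) * (x : ℂ)) / ((N : ℂ) * h)) = 1 := by
  obtain ⟨k, rfl⟩ := hx
  have hN' : (N : ℂ) ≠ 0 := Nat.cast_ne_zero.mpr hN.ne'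
  have hh' : (h : ℂ) ≠ 0 := Nat.cast_ne_zero.mpr hh.ne'
  have : -(2 * (Real.pi : ℂ) * Complex.I * (v : ℂ) * (((N:ℤ) * h * k : ℤ) : ℂ)) / ((N : ℂ) * h)
      = ((-(v * k) : ℤ) : ℂ) * (2 * Real.pi * Complex.I) := by
    push_cast
    field_simp
  rw [this, Complex.exp_int_mul_two_pi_mul_I]

/-- For `h ∣ 24` and `h ∣ N`, the map `[[a,b],[c,d]] ↦ e^{-2πi v c d/(Nh)}` is a
group homomorphism `Γ₀(N) → ℂˣ` whose kernel contains `Γ₀(Nh)`. -/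
theorem chi_hom_Gamma0 (N h : ℕ) (v : ℤ) (hN : 0 < N) (hh24 : h ∣ 24) (hhN : h ∣ N) :
    ∃ χ : CongruenceSubgroup.Gamma0 N →* ℂˣ,
      (∀ γ : CongruenceSubgroup.Gamma0 N,
        (χ γ : ℂ) = Complex.exp (-(2 * (Real.pi : ℂ) * Complex.I * (v : ℂ) *
          ((γ : Matrix.SpecialLinearGroup (Fin 2) ℤ).val 1 0 : ℂ) *
          ((γ : Matrix.SpecialLinearGroup (Fin 2) ℤ).val 1 1 : ℂ)) / ((N : ℂ) * (h : ℂ)))) ∧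
      ∀ γ : CongruenceSubgroup.Gamma0 N,
        (γ : Matrix.SpecialLinearGroup (Fin 2) ℤ) ∈ CongruenceSubgroup.Gamma0 (N * h) →
          χ γ = 1 := by
  have hh0 : 0 < h := Nat.pos_of_dvd_of_pos hh24 (by norm_num)
  set A : CongruenceSubgroup.Gamma0 N → ℂ := fun γ =>
    -(2 * (Real.pi : ℂ) * Complex.I * (v : ℂ) *
      ((γ : Matrix.SpecialLinearGroup (Fin 2) ℤ).val 1 0 : ℂ) *
      ((γ : Matrix.SpecialLinearGroup (Fin 2) ℤ).val 1 1 : ℂ)) / ((N : ℂ) * (h : ℂ)) with hA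
  have hmul : ∀ γ₁ γ₂ : CongruenceSubgroup.Gamma0 N,
      Complex.exp (A (γ₁ * γ₂)) = Complex.exp (A γ₁) * Complex.exp (A γ₂) := by
    intro γ₁ γ₂
    set c₁ : ℤ := (γ₁ : Matrix.SpecialLinearGroup (Fin 2) ℤ).val 1 0
    set d₁ : ℤ := (γ₁ : Matrix.SpecialLinearGroup (Fin 2) ℤ).val 1 1
    set a₂ : ℤ := (γ₂ : Matrix.SpecialLinearGroup (Fin 2) ℤ).val 0 0
    set b₂ : ℤ := (γ₂ : Matrix.SpecialLinearGroup (Fin 2) ℤ).val 0 1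
    set c₂ : ℤ := (γ₂ : Matrix.SpecialLinearGroup (Fin 2) ℤ).val 1 0
    set d₂ : ℤ := (γ₂ : Matrix.SpecialLinearGroup (Fin 2) ℤ).val 1 1
    have hc12 : ((γ₁ * γ₂ : CongruenceSubgroup.Gamma0 N) :
        Matrix.SpecialLinearGroup (Fin 2) ℤ).val 1 0 = c₁ * a₂ + d₁ * c₂ := by
      simp [Matrix.mul_apply, Fin.sum_univ_two, c₁, d₁, a₂, c₂]
    have hd12 : ((γ₁ * γ₂ : CongruenceSubgroup.Gamma0 N) :
        Matrix.SpecialLinearGroup (Fin 2) ℤ).val 1 1 = c₁ * b₂ + d₁ * d₂ := by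
      simp [Matrix.mul_apply, Fin.sum_univ_two, c₁, d₁, b₂, d₂]
    have det1 : (γ₁ : Matrix.SpecialLinearGroup (Fin 2) ℤ).val 0 0 * d₁ -
        (γ₁ : Matrix.SpecialLinearGroup (Fin 2) ℤ).val 0 1 * c₁ = 1 := by
      have := (γ₁ : Matrix.SpecialLinearGroup (Fin 2) ℤ).prop
      rw [Matrix.det_fin_two] at this
      linarith
    have det2 : a₂ * d₂ - b₂ * c₂ = 1 := by
      have := (γ₂ : Matrix.SpecialLinearGroup (Fin 2) ℤ).prop
      rw [Matrix.det_fin_two] at this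
      linarith
    have hc1 : (N : ℤ) ∣ c₁ := (ZMod.intCast_zmod_eq_zero_iff_dvd _ _).mp
      (CongruenceSubgroup.Gamma0_mem.mp γ₁.prop)
    have hc2 : (N : ℤ) ∣ c₂ := (ZMod.intCast_zmod_eq_zero_iff_dvd _ _).mp
      (CongruenceSubgroup.Gamma0_mem.mp γ₂.prop)
    have hdvd := key_dvd N h hh24 hhN _ _ c₁ d₁ a₂ b₂ c₂ d₂ det1 det2 hc1 hc2
    have hsplit : A (γ₁ * γ₂) =
        (-(2 * (Real.pi : ℂ) * Complex.I * (v : ℂ) *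
          (((c₁ * a₂ + d₁ * c₂) * (c₁ * b₂ + d₁ * d₂) - c₁ * d₁ - c₂ * d₂ : ℤ) : ℂ))
          / ((N : ℂ) * h)) + (A γ₁ + A γ₂) := by
      rw [hA]
      simp only [hc12, hd12]
      push_cast
      ring
    rw [hsplit, Complex.exp_add, exp_one_of_dvd N h hN hh0 v _ hdvd, one_mul, Complex.exp_add]
  refine ⟨{ toFun := fun γ => Units.mk0 (Complex.exp (A γ)) (Complex.exp_ne_zero _)
            map_one' := ?_
            map_mul' := ?_ }, ?_, ?_⟩
  · ext
    simp only [Units.val_mk0, Units.val_one]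
    have : A 1 = 0 := by
      rw [hA]
      simp
    rw [this, Complex.exp_zero]
  · intro γ₁ γ₂
    ext
    simpa using hmul γ₁ γ₂
  · intro γ; rfl
  · intro γ hγ
    ext
    simp only [Units.val_mk0, Units.val_one, MonoidHom.coe_mk, OneHom.coe_mk]
    have hc : ((N : ℤ) * h) ∣ (γ : Matrix.SpecialLinearGroup (Fin 2) ℤ).val 1 0 := by
      have := CongruenceSubgroup.Gamma0_mem.mp hγ
      have := (ZMod.intCast_zmod_eq_zero_iff_dvd _ (N*h)).mp this
      exact_mod_cast this
    have : ((N : ℤ) * h) ∣ (γ : Matrix.SpecialLinearGroup (Fin 2) ℤ).val 1 0 *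
        (γ : Matrix.SpecialLinearGroup (Fin 2) ℤ).val 1 1 := hc.mul_right _
    have := exp_one_of_dvd N h hN hh0 v _ this
    rw [hA]
    push_cast at this ⊢
    convert this using 2
    ring
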